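/- For any real t > 0, there exist constants c_1, c_2 > 0 such that for all real g ≥ 2, the sum over pairs (a_1, a_2) of positive integers with a_1^t · a_2^t ≥ g of 1/(a_1(a_1+1)) · 1/(a_2(a_2+1)) lies between c_1 · (log g) · g^{-1/t} and c_2 · (log g) · g^{-1/t}. -/

import Mathlib

open scoped BigOperators

namespace Stmt1
open Real Finset



noncomputable def w (n : ℕ) : ℝ := 1 / (((n : ℝ) + 1) * ((n : ℝ) + 2))

lemma w_pos (n : ℕ) : 0 < w n := by unfold w; positivity

lemma w_nonneg (n : ℕ) : 0 ≤ w n := (w_pos n).le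

lemma w_sub (n : ℕ) : w n = 1 / ((n : ℝ) + 1) - 1 / ((n : ℝ) + 2) := by
  unfold w
  have h1 : ((n : ℝ) + 1) ≠ 0 := by positivity
  have h2 : ((n : ℝ) + 2) ≠ 0 := by positivity
  field_simp
  ring

lemma summable_w : Summable w := by
  have h0 : Summable (fun n : ℕ => 1 / (n : ℝ) ^ 2) := summable_one_div_nat_pow.mpr one_lt_two
  have h1 : Summable (fun n : ℕ => 1 / ((n : ℝ) + 1) ^ 2) := by
    have := (_root_.summable_nat_add_iff (f := fun n : ℕ => 1 / (n : ℝ) ^ 2) 1).mpr h0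
    simpa using this
  refine Summable.of_nonneg_of_le w_nonneg (fun n => ?_) h1
  unfold w
  refine one_div_le_one_div_of_le (by positivity) ?_
  nlinarith [Nat.cast_nonneg (α := ℝ) n]

lemma sum_w_range (N : ℕ) : ∑ i ∈ range N, w i = 1 - 1 / ((N : ℝ) + 1) := by
  induction N with
  | zero => simp
  | succ N ih =>
    rw [Finset.sum_range_succ, ih, w_sub]
    push_cast
    ring

lemma sum_w_Ico (a N : ℕ) (h : a ≤ N) :
    ∑ i ∈ Ico a N, w i = 1 / ((a : ℝ) + 1) - 1 / ((N : ℝ) + 1) := by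
  rw [Finset.sum_Ico_eq_sub _ h, sum_w_range, sum_w_range]
  ring

lemma summable_tail (m : ℕ) : Summable (fun j => if m ≤ j then w j else 0) := by
  refine Summable.of_nonneg_of_le (fun j => ?_) (fun j => ?_) summable_w
  · split <;> simp [w_nonneg]
  · split <;> simp [w_nonneg]

lemma tail_le (m : ℕ) : (∑' j, if m ≤ j then w j else 0) ≤ 1 / ((m : ℝ) + 1) := by
  refine Summable.tsum_le_of_sum_le (summable_tail m) fun s => ?_
  classical
  rw [← Finset.sum_filter]
  set N := m + s.sup id + 1 with hN
  have hsub : s.filter (fun j => m ≤ j) ⊆ Ico m N := by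
    intro j hj
    rw [Finset.mem_filter] at hj
    rw [Finset.mem_Ico]
    refine ⟨hj.2, ?_⟩
    have : j ≤ s.sup id := Finset.le_sup (f := id) hj.1
    omega
  calc ∑ j ∈ s.filter (fun j => m ≤ j), w j ≤ ∑ j ∈ Ico m N, w j :=
        Finset.sum_le_sum_of_subset_of_nonneg hsub (fun j _ _ => w_nonneg j)
    _ = 1 / ((m : ℝ) + 1) - 1 / ((N : ℝ) + 1) := sum_w_Ico m N (by omega)
    _ ≤ 1 / ((m : ℝ) + 1) := by
        have : (0:ℝ) < (N : ℝ) + 1 := by positivity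
        have : (0:ℝ) ≤ 1 / ((N : ℝ) + 1) := by positivity
        linarith

lemma tail_ge (m : ℕ) : 1 / (2 * ((m : ℝ) + 1)) ≤ (∑' j, if m ≤ j then w j else 0) := by
  have h := Summable.sum_le_tsum (Finset.Ico m (2 * m + 2))
    (fun i _ => by split <;> simp [w_nonneg] : ∀ i ∉ Finset.Ico m (2 * m + 2), 0 ≤ if m ≤ i then w i else 0)
    (summable_tail m)
  have heq : ∑ j ∈ Finset.Ico m (2 * m + 2), (if m ≤ j then w j else 0)
      = ∑ j ∈ Ico m (2 * m + 2), w j := by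
    refine Finset.sum_congr rfl fun j hj => ?_
    rw [Finset.mem_Ico] at hj
    rw [if_pos hj.1]
  rw [heq, sum_w_Ico m _ (by omega)] at h
  refine le_trans ?_ h
  have hm : (0:ℝ) ≤ (m:ℝ) := Nat.cast_nonneg m
  have h1 : (0:ℝ) < (m:ℝ) + 1 := by linarith
  have h2 : (0:ℝ) < ((2*m+2 : ℕ):ℝ) + 1 := by positivity
  push_cast
  rw [div_sub_div _ _ (by linarith) (by push_cast at h2 ⊢; linarith), div_le_div_iff₀ (by linarith) (by positivity)]
  ring_nf
  nlinarith

lemma w_def (n : ℕ) : w n = 1 / (((n : ℝ) + 1) * ((n : ℝ) + 2)) := rfl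

noncomputable def F (G : ℝ) (x : ℕ × ℕ) : ℝ :=
  if G ≤ ((x.1 : ℝ) + 1) * ((x.2 : ℝ) + 1) then w x.1 * w x.2 else 0

lemma F_nonneg (G : ℝ) (x : ℕ × ℕ) : 0 ≤ F G x := by
  unfold F; split
  · exact mul_nonneg (w_nonneg _) (w_nonneg _)
  · exact le_refl 0

lemma F_le (G : ℝ) (x : ℕ × ℕ) : F G x ≤ w x.1 * w x.2 := by
  unfold F; split
  · exact le_refl _
  · exact mul_nonneg (w_nonneg _) (w_nonneg _)

lemma summable_F (G : ℝ) : Summable (F G) :=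
  Summable.of_nonneg_of_le (F_nonneg G) (F_le G)
    (summable_w.mul_of_nonneg summable_w w_nonneg w_nonneg)

lemma summable_F_slice (G : ℝ) (i : ℕ) : Summable (fun j => F G (i, j)) := by
  refine Summable.of_nonneg_of_le (fun j => F_nonneg G (i, j)) (fun j => F_le G (i, j))
    (summable_w.mul_left (w i))

/-- `M G i = ⌈G/(i+1)⌉₊`. -/
noncomputable def M (G : ℝ) (i : ℕ) : ℕ := ⌈G / ((i : ℝ) + 1)⌉₊

lemma M_pos (hG : 0 < G) (i : ℕ) : 0 < M G i :=
  Nat.ceil_pos.mpr (div_pos hG (by positivity))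

lemma cond_iff (hG : 0 < G) (i j : ℕ) :
    (G ≤ ((i : ℝ) + 1) * ((j : ℝ) + 1)) ↔ (M G i - 1 ≤ j) := by
  have hM := M_pos hG i
  have h1 : (M G i - 1 ≤ j) ↔ M G i ≤ j + 1 := by omega
  rw [h1]
  unfold M
  rw [Nat.ceil_le]
  rw [div_le_iff₀ (by positivity : (0:ℝ) < (i : ℝ) + 1)]
  push_cast
  constructor <;> intro h <;> nlinarith

lemma M_cast (hG : 0 < G) (i : ℕ) : ((M G i - 1 : ℕ) : ℝ) + 1 = (M G i : ℝ) := by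
  have := M_pos hG i
  have : ((M G i - 1 : ℕ) : ℝ) = (M G i : ℝ) - 1 := by
    push_cast [Nat.cast_sub this]
    ring
  rw [this]; ring

lemma S_eq (hG : 0 < G) :
    ∑' x : ℕ × ℕ, F G x = ∑' i : ℕ, w i * ∑' j : ℕ, (if M G i - 1 ≤ j then w j else 0) := by
  rw [Summable.tsum_prod' (summable_F G) (summable_F_slice G)]
  refine tsum_congr fun i => ?_
  rw [← tsum_mul_left]
  refine tsum_congr fun j => ?_
  unfold F
  simp only [cond_iff hG i j]
  split <;> simp

lemma summable_wM (hG : 0 < G) : Summable (fun i => w i / (M G i : ℝ)) := by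
  refine Summable.of_nonneg_of_le (fun i => ?_) (fun i => ?_) summable_w
  · have h2 : (0 : ℝ) < (M G i : ℝ) := by exact_mod_cast M_pos hG i
    exact div_nonneg (w_nonneg i) h2.le
  · have h2 : (1 : ℝ) ≤ (M G i : ℝ) := by exact_mod_cast M_pos hG i
    exact div_le_self (w_nonneg i) h2

lemma summable_wT (hG : 0 < G) :
    Summable (fun i => w i * ∑' j : ℕ, (if M G i - 1 ≤ j then w j else 0)) := by
  refine Summable.of_nonneg_of_le (fun i => ?_) (fun i => ?_) summable_w
  · exact mul_nonneg (w_nonneg i) (tsum_nonneg (fun j => by split <;> simp [w_nonneg]))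
  · have h := tail_le (M G i - 1)
    rw [M_cast hG] at h
    have h2 : (1 : ℝ) ≤ (M G i : ℝ) := by exact_mod_cast M_pos hG i
    calc w i * ∑' j, (if M G i - 1 ≤ j then w j else 0) ≤ w i * (1 / (M G i : ℝ)) :=
          mul_le_mul_of_nonneg_left h (w_nonneg i)
      _ ≤ w i * 1 := by
          refine mul_le_mul_of_nonneg_left ?_ (w_nonneg i)
          rw [div_le_one (by linarith)]; linarith
      _ = w i := mul_one _

lemma S_le (hG : 0 < G) :
    ∑' x : ℕ × ℕ, F G x ≤ ∑' i : ℕ, w i / (M G i : ℝ) := by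
  rw [S_eq hG]
  refine Summable.tsum_le_tsum (fun i => ?_) (summable_wT hG) (summable_wM hG)
  have h := tail_le (M G i - 1)
  rw [M_cast hG] at h
  calc w i * ∑' j, (if M G i - 1 ≤ j then w j else 0) ≤ w i * (1 / (M G i : ℝ)) :=
        mul_le_mul_of_nonneg_left h (w_nonneg i)
    _ = w i / (M G i : ℝ) := by ring

lemma summable_wM2 (hG : 0 < G) : Summable (fun i => w i / (2 * (M G i : ℝ))) := by
  refine Summable.of_nonneg_of_le (fun i => ?_) (fun i => ?_) (summable_wM hG)
  · have h2 : (0 : ℝ) < (M G i : ℝ) := by exact_mod_cast M_pos hG i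
    exact div_nonneg (w_nonneg i) (by linarith)
  · have h2 : (0 : ℝ) < (M G i : ℝ) := by exact_mod_cast M_pos hG i
    apply div_le_div_of_nonneg_left (w_nonneg i) h2
    linarith

lemma S_ge (hG : 0 < G) :
    ∑' i : ℕ, w i / (2 * (M G i : ℝ)) ≤ ∑' x : ℕ × ℕ, F G x := by
  rw [S_eq hG]
  refine Summable.tsum_le_tsum (fun i => ?_) (summable_wM2 hG) (summable_wT hG)
  have h := tail_ge (M G i - 1)
  rw [M_cast hG] at h
  calc w i / (2 * (M G i : ℝ)) = w i * (1 / (2 * (M G i : ℝ))) := by ring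
    _ ≤ w i * ∑' j, (if M G i - 1 ≤ j then w j else 0) :=
        mul_le_mul_of_nonneg_left h (w_nonneg i)

-- harmonic bounds
lemma log_gap_ge (x : ℝ) (hx : 0 < x) : 1 / (x + 1) ≤ log (x + 1) - log x := by
  have h := Real.log_le_sub_one_of_pos (x := x / (x + 1)) (by positivity)
  rw [Real.log_div (by positivity) (by positivity)] at h
  have : x / (x + 1) - 1 = -(1 / (x + 1)) := by field_simp; ring
  rw [this] at h
  linarith

lemma log_gap_le (x : ℝ) (hx : 0 < x) : log (x + 1) - log x ≤ 1 / x := by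
  have h := Real.log_le_sub_one_of_pos (x := (x + 1) / x) (by positivity)
  rw [Real.log_div (by positivity) (by positivity)] at h
  have : (x + 1) / x - 1 = 1 / x := by field_simp; ring
  linarith

lemma harm_le (K : ℕ) : ∑ i ∈ range K, 1 / ((i : ℝ) + 2) ≤ log ((K : ℝ) + 1) := by
  have h : ∑ i ∈ range K, (log ((i : ℝ) + 2) - log ((i : ℝ) + 1)) = log ((K : ℝ) + 1) := by
    calc ∑ i ∈ range K, (log ((i : ℝ) + 2) - log ((i : ℝ) + 1))
        = ∑ i ∈ range K, ((fun n : ℕ => log ((n : ℝ) + 1)) (i + 1) - (fun n : ℕ => log ((n : ℝ) + 1)) i) := by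
          refine Finset.sum_congr rfl fun i _ => ?_
          push_cast
          ring_nf
      _ = log (((K:ℕ) : ℝ) + 1) - log (((0:ℕ) : ℝ) + 1) :=
          Finset.sum_range_sub (fun n : ℕ => log ((n : ℝ) + 1)) K
      _ = log ((K : ℝ) + 1) := by norm_num
  rw [← h]
  refine Finset.sum_le_sum fun i _ => ?_
  have := log_gap_ge ((i : ℝ) + 1) (by positivity)
  have e : (i : ℝ) + 1 + 1 = (i : ℝ) + 2 := by ring
  rw [e] at this
  linarith

lemma harm_ge (K : ℕ) : log ((K : ℝ) + 2) - log 2 ≤ ∑ i ∈ range K, 1 / ((i : ℝ) + 2) := by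
  have h : ∑ i ∈ range K, (log ((i : ℝ) + 3) - log ((i : ℝ) + 2)) = log ((K : ℝ) + 2) - log 2 := by
    calc ∑ i ∈ range K, (log ((i : ℝ) + 3) - log ((i : ℝ) + 2))
        = ∑ i ∈ range K, ((fun n : ℕ => log ((n : ℝ) + 2)) (i + 1) - (fun n : ℕ => log ((n : ℝ) + 2)) i) := by
          refine Finset.sum_congr rfl fun i _ => ?_
          push_cast
          ring_nf
      _ = log (((K:ℕ) : ℝ) + 2) - log (((0:ℕ) : ℝ) + 2) :=
          Finset.sum_range_sub (fun n : ℕ => log ((n : ℝ) + 2)) K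
      _ = log ((K : ℝ) + 2) - log 2 := by norm_num
  rw [← h]
  refine Finset.sum_le_sum fun i _ => ?_
  have := log_gap_le ((i : ℝ) + 2) (by positivity)
  have e : (i : ℝ) + 2 + 1 = (i : ℝ) + 3 := by ring
  rw [e] at this
  linarith

-- upper bound on V
lemma V_le {G : ℝ} (hG : 1 ≤ G) :
    ∑' i : ℕ, w i / (M G i : ℝ) ≤ (log G + log 2 + 1) / G := by
  have hG0 : 0 < G := by linarith
  set K := ⌊G⌋₊ with hK
  have hKle : (K : ℝ) ≤ G := Nat.floor_le hG0.le
  have hKgt : G < (K : ℝ) + 1 := Nat.lt_floor_add_one G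
  -- pointwise bound
  have hpt : ∀ i : ℕ, w i / (M G i : ℝ) ≤
      (if i < K then 1 / (G * ((i : ℝ) + 2)) else 0) + (if K ≤ i then w i else 0) := by
    intro i
    by_cases hi : i < K
    · rw [if_pos hi, if_neg (by omega)]
      have hMge : G / ((i : ℝ) + 1) ≤ (M G i : ℝ) := Nat.le_ceil _
      have hMpos : (0 : ℝ) < (M G i : ℝ) := by exact_mod_cast M_pos hG0 i
      have h1 : 1 / (M G i : ℝ) ≤ ((i : ℝ) + 1) / G := by
        rw [div_le_div_iff₀ hMpos hG0]
        have := (div_le_iff₀ (by positivity : (0:ℝ) < (i:ℝ)+1)).mp hMge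
        linarith
      calc w i / (M G i : ℝ) = w i * (1 / (M G i : ℝ)) := by ring
        _ ≤ w i * (((i : ℝ) + 1) / G) := mul_le_mul_of_nonneg_left h1 (w_nonneg i)
        _ = 1 / (G * ((i : ℝ) + 2)) + 0 := by
            rw [w_def]
            field_simp
            ring
    · rw [if_neg hi, if_pos (by omega)]
      have h2 : (1 : ℝ) ≤ (M G i : ℝ) := by exact_mod_cast M_pos hG0 i
      simpa using div_le_self (w_nonneg i) h2
  have hsum1 : Summable (fun i : ℕ => if i < K then 1 / (G * ((i : ℝ) + 2)) else 0) := by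
    apply summable_of_ne_finset_zero (s := range K)
    intro i hi
    rw [if_neg (by simpa using hi)]
  have hsum2 : Summable (fun i : ℕ => if K ≤ i then w i else 0) := summable_tail K
  have hVle : ∑' i : ℕ, w i / (M G i : ℝ) ≤
      (∑' i : ℕ, if i < K then 1 / (G * ((i : ℝ) + 2)) else 0) +
      (∑' i : ℕ, if K ≤ i then w i else 0) := by
    rw [← Summable.tsum_add hsum1 hsum2]
    exact Summable.tsum_le_tsum hpt (summable_wM hG0) (hsum1.add hsum2)
  have h1 : (∑' i : ℕ, if i < K then 1 / (G * ((i : ℝ) + 2)) else 0)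
      ≤ (log G + log 2) / G := by
    rw [tsum_eq_sum (s := range K) (fun i hi => by rw [if_neg (by simpa using hi)])]
    have : ∑ i ∈ range K, (if i < K then 1 / (G * ((i : ℝ) + 2)) else 0)
        = ∑ i ∈ range K, (1 / G) * (1 / ((i : ℝ) + 2)) := by
      refine Finset.sum_congr rfl fun i hi => ?_
      rw [if_pos (Finset.mem_range.mp hi)]
      field_simp
    rw [this, ← Finset.mul_sum]
    have hlog : ∑ i ∈ range K, 1 / ((i : ℝ) + 2) ≤ log G + log 2 := by
      refine (harm_le K).trans ?_
      have : (K : ℝ) + 1 ≤ 2 * G := by linarith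
      calc log ((K : ℝ) + 1) ≤ log (2 * G) := by
            apply Real.log_le_log (by positivity) this
        _ = log 2 + log G := Real.log_mul (by norm_num) (by positivity)
        _ = log G + log 2 := by ring
    calc (1 / G) * ∑ i ∈ range K, 1 / ((i : ℝ) + 2) ≤ (1 / G) * (log G + log 2) :=
          mul_le_mul_of_nonneg_left hlog (by positivity)
      _ = (log G + log 2) / G := by ring
  have h2 : (∑' i : ℕ, if K ≤ i then w i else 0) ≤ 1 / G := by
    refine (tail_le K).trans ?_
    apply div_le_div_of_nonneg_left (by norm_num) hG0
    linarith
  calc ∑' i : ℕ, w i / (M G i : ℝ) ≤ _ := hVle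
    _ ≤ (log G + log 2) / G + 1 / G := add_le_add h1 h2
    _ = (log G + log 2 + 1) / G := by ring

-- lower bound
lemma V2_ge {G : ℝ} (hG : 1 < G) :
    (log G - log 2) / (4 * G) ≤ ∑' i : ℕ, w i / (2 * (M G i : ℝ)) := by
  have hG0 : 0 < G := by linarith
  set K := ⌊G⌋₊ with hK
  have hK1 : 1 ≤ K := Nat.one_le_floor_iff _ |>.mpr hG.le -- check name
  have hKle : (K : ℝ) ≤ G := Nat.floor_le hG0.le
  have hKgt : G < (K : ℝ) + 1 := Nat.lt_floor_add_one G
  have hfin : ∑ i ∈ range K, (1 / (4 * G)) * (1 / ((i : ℝ) + 2))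
      ≤ ∑ i ∈ range K, w i / (2 * (M G i : ℝ)) := by
    refine Finset.sum_le_sum fun i hi => ?_
    have hiK : i < K := Finset.mem_range.mp hi
    have hi1 : (i : ℝ) + 1 ≤ G := by
      have : (i : ℝ) + 1 ≤ (K : ℝ) := by exact_mod_cast Nat.succ_le_of_lt hiK
      linarith
    have hMlt : (M G i : ℝ) < G / ((i : ℝ) + 1) + 1 :=
      Nat.ceil_lt_add_one (by positivity)
    have hdiv1 : 1 ≤ G / ((i : ℝ) + 1) := by
      rw [le_div_iff₀ (by positivity)]; linarith
    have hMle : (M G i : ℝ) ≤ 2 * G / ((i : ℝ) + 1) := by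
      have : G / ((i : ℝ) + 1) + 1 ≤ 2 * G / ((i : ℝ) + 1) := by
        have : 2 * G / ((i : ℝ) + 1) = G / ((i:ℝ)+1) + G / ((i:ℝ)+1) := by ring
        linarith
      linarith
    have hMpos : (0 : ℝ) < (M G i : ℝ) := by exact_mod_cast M_pos hG0 i
    have key : ((i : ℝ) + 1) / (4 * G) ≤ 1 / (2 * (M G i : ℝ)) := by
      rw [div_le_div_iff₀ (by positivity) (by positivity)]
      have h := mul_le_mul_of_nonneg_left hMle (by positivity : (0:ℝ) ≤ ((i:ℝ)+1))
      have e : ((i : ℝ) + 1) * (2 * G / ((i : ℝ) + 1)) = 2 * G := by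
        field_simp
      rw [e] at h
      nlinarith
    calc (1 / (4 * G)) * (1 / ((i : ℝ) + 2)) = (((i:ℝ)+1) / (4 * G)) * (1 / (((i:ℝ)+1) * ((i:ℝ)+2))) := by
          field_simp
      _ ≤ (1 / (2 * (M G i : ℝ))) * (1 / (((i:ℝ)+1) * ((i:ℝ)+2))) := by
          apply mul_le_mul_of_nonneg_right key (by positivity)
      _ = w i / (2 * (M G i : ℝ)) := by rw [w_def]; ring
  have hts : ∑ i ∈ range K, w i / (2 * (M G i : ℝ)) ≤ ∑' i : ℕ, w i / (2 * (M G i : ℝ)) := by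
    refine Summable.sum_le_tsum (range K) (fun i _ => ?_) (summable_wM2 hG0)
    have hMpos : (0 : ℝ) < (M G i : ℝ) := by exact_mod_cast M_pos hG0 i
    exact div_nonneg (w_nonneg i) (by linarith)
  refine le_trans ?_ (hfin.trans hts)
  rw [← Finset.mul_sum]
  have hlog : log G - log 2 ≤ ∑ i ∈ range K, 1 / ((i : ℝ) + 2) := by
    refine le_trans ?_ (harm_ge K)
    have : log G ≤ log ((K : ℝ) + 2) := Real.log_le_log hG0 (by linarith)
    linarith
  calc (log G - log 2) / (4 * G) = (1 / (4 * G)) * (log G - log 2) := by ring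
    _ ≤ (1 / (4 * G)) * ∑ i ∈ range K, 1 / ((i : ℝ) + 2) :=
        mul_le_mul_of_nonneg_left hlog (by positivity)

lemma V2_ge' {G : ℝ} (hG : 1 < G) :
    1 / (4 * (G + 1)) ≤ ∑' i : ℕ, w i / (2 * (M G i : ℝ)) := by
  have hG0 : 0 < G := by linarith
  have h0 : w 0 / (2 * (M G 0 : ℝ)) ≤ ∑' i : ℕ, w i / (2 * (M G i : ℝ)) := by
    refine Summable.le_tsum (summable_wM2 hG0) 0 fun j _ => ?_
    have hMpos : (0 : ℝ) < (M G j : ℝ) := by exact_mod_cast M_pos hG0 j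
    exact div_nonneg (w_nonneg j) (by linarith)
  refine le_trans ?_ h0
  have hw0 : w 0 = 1 / 2 := by rw [w_def]; norm_num
  have hM0 : (M G 0 : ℝ) < G + 1 := by
    have := Nat.ceil_lt_add_one (by positivity : (0:ℝ) ≤ G / ((0:ℕ) + 1))
    unfold M at *
    simpa using this
  have hMpos : (0 : ℝ) < (M G 0 : ℝ) := by exact_mod_cast M_pos hG0 0
  rw [hw0]
  rw [div_le_div_iff₀ (by positivity) (by positivity)]
  nlinarith

end Stmt1

open Real Finset

open Real in
theorem stmt_1 (t : ℝ) (ht : 0 < t) :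
    ∃ c1 c2 : ℝ, 0 < c1 ∧ 0 < c2 ∧ ∀ g : ℝ, 2 ≤ g →
      c1 * Real.log g * g ^ (-(1 / t)) ≤
        (∑' p : ℕ+ × ℕ+, if g ≤ ((p.1 : ℝ)) ^ t * ((p.2 : ℝ)) ^ t then
            1 / ((p.1 : ℝ) * ((p.1 : ℝ) + 1)) * (1 / ((p.2 : ℝ) * ((p.2 : ℝ) + 1))) else 0) ∧
      (∑' p : ℕ+ × ℕ+, if g ≤ ((p.1 : ℝ)) ^ t * ((p.2 : ℝ)) ^ t then
            1 / ((p.1 : ℝ) * ((p.1 : ℝ) + 1)) * (1 / ((p.2 : ℝ) * ((p.2 : ℝ) + 1))) else 0)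
          ≤ c2 * Real.log g * g ^ (-(1 / t)) := by
  have hl2 : (0:ℝ) < log 2 := Real.log_pos one_lt_two
  have hl4 : (0:ℝ) < log 4 := Real.log_pos (by norm_num)
  set c1 : ℝ := min (1 / (20 * t * log 4)) (1 / (8 * t)) with hc1def
  set c2 : ℝ := (1 + (log 2 + 1) * t / log 2) / t with hc2def
  have hc1pos : 0 < c1 := lt_min (by positivity) (by positivity)
  have hc2pos : 0 < c2 := by
    apply div_pos ?_ ht
    have : 0 < (log 2 + 1) * t / log 2 := by positivity
    linarith
  refine ⟨c1, c2, hc1pos, hc2pos, ?_⟩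
  intro g hg
  have hg0 : (0:ℝ) < g := by linarith
  set G : ℝ := g ^ (1/t) with hGdef
  have hG1 : 1 < G := by
    rw [hGdef]
    rw [Real.one_lt_rpow_iff_of_pos hg0]
    left
    constructor
    · linarith
    · positivity
  have hG0 : (0:ℝ) < G := by linarith
  have hlogG : log G = log g / t := by rw [hGdef, Real.log_rpow hg0]; ring
  have hloggG : log g = t * log G := by rw [hlogG]; field_simp
  have hgpow : g ^ (-(1/t)) = 1 / G := by
    rw [Real.rpow_neg hg0.le, hGdef]
    exact (one_div _).symm
  have hlogg2 : log 2 ≤ log g := Real.log_le_log (by norm_num) hg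
  have hloggnn : 0 ≤ log g := by linarith
  have hlogGpos : 0 < log G := by
    rw [hlogG]
    exact div_pos (lt_of_lt_of_le hl2 hlogg2) ht
  -- identify the sum
  have hEq : (∑' p : ℕ+ × ℕ+, if g ≤ ((p.1 : ℝ)) ^ t * ((p.2 : ℝ)) ^ t then
      1 / ((p.1 : ℝ) * ((p.1 : ℝ) + 1)) * (1 / ((p.2 : ℝ) * ((p.2 : ℝ) + 1))) else 0)
      = ∑' x : ℕ × ℕ, Stmt1.F G x := by
    rw [← Equiv.tsum_eq (Equiv.pnatEquivNat.symm.prodCongr Equiv.pnatEquivNat.symm)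
      (fun p : ℕ+ × ℕ+ => if g ≤ ((p.1 : ℝ)) ^ t * ((p.2 : ℝ)) ^ t then
        1 / ((p.1 : ℝ) * ((p.1 : ℝ) + 1)) * (1 / ((p.2 : ℝ) * ((p.2 : ℝ) + 1))) else 0)]
    refine tsum_congr fun x => ?_
    obtain ⟨i, j⟩ := x
    have e1 : ((((Equiv.pnatEquivNat.symm.prodCongr Equiv.pnatEquivNat.symm) (i, j)).1 : ℕ+) : ℝ)
        = (i : ℝ) + 1 := by
      show ((Nat.succPNat i : ℕ+) : ℝ) = (i : ℝ) + 1
      push_cast [Nat.succPNat]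
      norm_num
    have e2 : ((((Equiv.pnatEquivNat.symm.prodCongr Equiv.pnatEquivNat.symm) (i, j)).2 : ℕ+) : ℝ)
        = (j : ℝ) + 1 := by
      show ((Nat.succPNat j : ℕ+) : ℝ) = (j : ℝ) + 1
      push_cast [Nat.succPNat]
      norm_num
    rw [e1, e2]
    have hcond : (g ≤ ((i:ℝ)+1) ^ t * ((j:ℝ)+1) ^ t) ↔ (G ≤ ((i:ℝ)+1) * ((j:ℝ)+1)) := by
      rw [← Real.mul_rpow (by positivity) (by positivity)]
      rw [hGdef, one_div]
      exact (Real.rpow_inv_le_iff_of_pos hg0.le (by positivity) ht).symm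
    unfold Stmt1.F
    simp only [hcond]
    split
    · rw [Stmt1.w_def, Stmt1.w_def]
      norm_num
      ring
    · rfl
  rw [hEq, hgpow]
  constructor
  · -- lower bound
    by_cases hG4 : G ≤ 4
    · have hS : 1 / 20 ≤ ∑' x : ℕ × ℕ, Stmt1.F G x := by
        refine le_trans ?_ ((Stmt1.V2_ge' hG1).trans (Stmt1.S_ge hG0))
        have : G + 1 ≤ 5 := by linarith
        rw [div_le_div_iff₀ (by norm_num) (by positivity)]
        linarith
      refine le_trans ?_ hS
      have hlogG4 : log G ≤ log 4 := Real.log_le_log hG0 hG4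
      have hc1a : c1 ≤ 1 / (20 * t * log 4) := min_le_left _ _
      have h1 : c1 * log g ≤ (1 / (20 * t * log 4)) * (t * log 4) := by
        rw [hloggG]
        apply mul_le_mul hc1a ?_ (by positivity) (by positivity)
        apply mul_le_mul_of_nonneg_left hlogG4 ht.le
      have h2 : (1 / (20 * t * log 4)) * (t * log 4) = 1 / 20 := by
        field_simp
      have h3 : (1:ℝ) / G ≤ 1 := by
        rw [div_le_one hG0]; linarith
      calc c1 * log g * (1 / G) ≤ c1 * log g * 1 := by
            apply mul_le_mul_of_nonneg_left h3 (by positivity)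
        _ = c1 * log g := mul_one _
        _ ≤ 1 / 20 := by rw [← h2]; exact h1
    · push_neg at hG4
      have hlog4G : log 4 ≤ log G := Real.log_le_log (by norm_num) hG4.le
      have h2log2 : (2:ℝ) * log 2 = log 4 := by
        rw [show (4:ℝ) = 2 ^ 2 by norm_num, Real.log_pow]
        push_cast; ring
      have hS : log G / (8 * G) ≤ ∑' x : ℕ × ℕ, Stmt1.F G x := by
        refine le_trans ?_ ((Stmt1.V2_ge hG1).trans (Stmt1.S_ge hG0))
        rw [div_le_div_iff₀ (by positivity) (by positivity)]
        nlinarith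
      refine le_trans ?_ hS
      have hc1b : c1 ≤ 1 / (8 * t) := min_le_right _ _
      have h1 : c1 * log g ≤ (1 / (8 * t)) * (t * log G) := by
        rw [hloggG]
        apply mul_le_mul_of_nonneg_right hc1b (by positivity)
      have h2 : (1 / (8 * t)) * (t * log G) = log G / 8 := by
        field_simp
      calc c1 * log g * (1 / G) ≤ ((1 / (8 * t)) * (t * log G)) * (1 / G) := by
            apply mul_le_mul_of_nonneg_right h1 (by positivity)
        _ = log G / (8 * G) := by rw [h2]; field_simp
  · -- upper bound
    have hS : ∑' x : ℕ × ℕ, Stmt1.F G x ≤ (log G + log 2 + 1) / G :=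
      (Stmt1.S_le hG0).trans (Stmt1.V_le hG1.le)
    refine hS.trans ?_
    have hA : log 2 ≤ t * log G := by rw [← hloggG]; exact hlogg2
    have hexp : c2 * log g = log G + (log 2 + 1) * (t * log G) / log 2 := by
      rw [hloggG, hc2def]
      field_simp
    have hkey : log G + log 2 + 1 ≤ c2 * log g := by
      rw [hexp]
      have h1 : (log 2 + 1) * log 2 ≤ (log 2 + 1) * (t * log G) :=
        mul_le_mul_of_nonneg_left hA (by positivity)
      have h2 : (log 2 + 1) * log 2 / log 2 = log 2 + 1 := by field_simp
      have h3 : (log 2 + 1) * log 2 / log 2 ≤ (log 2 + 1) * (t * log G) / log 2 := by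
        apply div_le_div_of_nonneg_right h1 hl2.le
      rw [h2] at h3
      linarith
    calc (log G + log 2 + 1) / G ≤ (c2 * log g) / G := by
          apply div_le_div_of_nonneg_right hkey hG0.le
      _ = c2 * log g * (1 / G) := by ring
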